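/- Let X be a regular topological space, U a regular open subset of X (U = interior (closure U)) such that U is not dense in X, and let B ⊆ closure(U) \ U. Then the indicator-type function f : X → ℝ defined by f(x) = 0 for x ∈ U ∪ B and f(x) = 1 otherwise is quasicontinuous. -/
import Mathlib


theorem indicator_of_regularOpen_quasicontinuous {X : Type*} [TopologicalSpace X]
    [RegularSpace X] (U : Set X) (hU : U = interior (closure U))
    (hnd : closure U ≠ Set.univ) (B : Set X) (hB : B ⊆ closure U \ U)
    (f : X → ℝ) (hf0 : ∀ x ∈ U ∪ B, f x = 0) (hf1 : ∀ x ∉ U ∪ B, f x = 1) :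
    ∀ V : Set ℝ, IsOpen V → f ⁻¹' V ⊆ closure (interior (f ⁻¹' V)) := by
  intro V hV
  have hUopen : IsOpen U := hU ▸ isOpen_interior
  have hsub1 : U ∪ B ⊆ closure (interior (U ∪ B)) := by
    have hUi : U ⊆ interior (U ∪ B) :=
      interior_maximal Set.subset_union_left hUopen
    intro x hx
    have hxc : x ∈ closure U := by
      rcases hx with hx | hx
      · exact subset_closure hx
      · exact (hB hx).1
    exact closure_mono hUi hxc
  have hsub2 : (U ∪ B)ᶜ ⊆ closure (interior (U ∪ B)ᶜ) := by
    have hopen : IsOpen (closure U)ᶜ := isClosed_closure.isOpen_compl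
    have h1 : (closure U)ᶜ ⊆ (U ∪ B)ᶜ := by
      intro x hx
      simp only [Set.mem_compl_iff, Set.mem_union] at *
      push_neg
      exact ⟨fun h => hx (subset_closure h), fun h => hx ((hB h).1)⟩
    have h2 : (closure U)ᶜ ⊆ interior (U ∪ B)ᶜ := interior_maximal h1 hopen
    intro x hx
    have hxU : x ∉ U := fun h => hx (Or.inl h)
    have : x ∈ closure ((closure U)ᶜ) := by
      rw [closure_compl]
      rw [← hU]
      exact hxU
    exact closure_mono h2 this
  by_cases h0 : (0 : ℝ) ∈ V <;> by_cases h1 : (1 : ℝ) ∈ V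
  · -- preimage = univ
    have : f ⁻¹' V = Set.univ := by
      ext x
      simp only [Set.mem_preimage, Set.mem_univ, iff_true]
      by_cases hx : x ∈ U ∪ B
      · simpa [hf0 x hx] using h0
      · simpa [hf1 x hx] using h1
    rw [this]
    simp
  · have : f ⁻¹' V = U ∪ B := by
      ext x
      simp only [Set.mem_preimage]
      by_cases hx : x ∈ U ∪ B
      · simpa [hf0 x hx, hx] using h0
      · simp [hf1 x hx, hx, h1]
    rw [this]; exact hsub1
  · have : f ⁻¹' V = (U ∪ B)ᶜ := by
      ext x
      simp only [Set.mem_preimage, Set.mem_compl_iff]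
      by_cases hx : x ∈ U ∪ B
      · simp [hf0 x hx, hx, h0]
      · simpa [hf1 x hx, hx] using h1
    rw [this]; exact hsub2
  · have : f ⁻¹' V = ∅ := by
      ext x
      simp only [Set.mem_preimage, Set.mem_empty_iff_false, iff_false]
      by_cases hx : x ∈ U ∪ B
      · simp [hf0 x hx, h0]
      · simp [hf1 x hx, h1]
    rw [this]
    simp
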